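/- The multiplication of groves of planar binary trees is associative, (A × B) × C = A × (B × C) for all groves A, B, C of positive degree, and the grove {1}, where 1 = | ∨ |, is a two-sided neutral element: {1} × A = A = A × {1}. Moreover, if A is a grove of degree n and B a grove of degree m ≥ 1, then A × B is a grove of degree nm. -/

import Mathlib

/-- A planar binary tree: a leaf `|` or a grafting `x ∨ y`. -/
inductive PBT : Type
  | leaf : PBT
  | node : PBT → PBT → PBT
  deriving DecidableEq

namespace PBT

/-- The degree: number of internal vertices. -/
def deg : PBT → ℕ
  | leaf => 0
  | node l r => deg l + deg r + 1

/-- The set `Y n` of planar binary trees of degree `n`. -/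
def Y (n : ℕ) : Set PBT := {t | t.deg = n}

/-- The `over` operation `x / y`. -/
def overOp : PBT → PBT → PBT
  | x, leaf => x
  | x, node yl yr => node (overOp x yl) yr

/-- The `under` operation `x \ y`. -/
def under : PBT → PBT → PBT
  | leaf, y => y
  | node xl xr, y => node xl (under xr y)

/-- The Tamari order, generated by `(x ∨ y) ∨ z ≤ x ∨ (y ∨ z)` and compatibility
with grafting on both sides. -/
inductive tle : PBT → PBT → Prop
  | refl (x : PBT) : tle x x
  | trans {x y z : PBT} : tle x y → tle y z → tle x z
  | rotate (x y z : PBT) : tle (node (node x y) z) (node x (node y z))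
  | node_left {x y : PBT} (z : PBT) : tle x y → tle (node x z) (node y z)
  | node_right {x y : PBT} (z : PBT) : tle x y → tle (node z x) (node z y)

/-- The sum of two planar binary trees: the Tamari interval `[x/y, x\y]`
(a subset of `Y (deg x + deg y)`). -/
def sum (x y : PBT) : Set PBT := {z | tle (overOp x y) z ∧ tle z (under x y)}

/-- A grove of degree `n`: a nonempty subset of `Y n`. -/
def Grove (n : ℕ) (A : Set PBT) : Prop := A.Nonempty ∧ ∀ x ∈ A, x.deg = n

/-- The sum of groves. -/
def gsum (A B : Set PBT) : Set PBT := ⋃ x ∈ A, ⋃ y ∈ B, sum x y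

/-- The reflection involution σ. -/
def σ : PBT → PBT
  | leaf => leaf
  | node l r => node (σ r) (σ l)

/-- The left sum `x ⊣ y` of trees (with the conventions `x ⊣ | = {x}`, `| ⊣ y = {|}`). -/
def lsum : PBT → PBT → Set PBT
  | x, leaf => {x}
  | leaf, _ => {leaf}
  | node xl xr, y => (fun z => node xl z) '' sum xr y

/-- The right sum `x ⊢ y` of trees (with the conventions `| ⊢ y = {y}`, `x ⊢ | = {|}`). -/
def rsum : PBT → PBT → Set PBT
  | leaf, y => {y}
  | _, leaf => {leaf}
  | x, node yl yr => (fun z => node z yr) '' sum x yl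

/-- Left sum of groves. -/
def glsum (A B : Set PBT) : Set PBT := ⋃ x ∈ A, ⋃ y ∈ B, lsum x y

/-- Right sum of groves. -/
def grsum (A B : Set PBT) : Set PBT := ⋃ x ∈ A, ⋃ y ∈ B, rsum x y

/-- Multiplication of a tree by a grove:
`| × B = {|}` and `(xˡ ∨ xʳ) × B = ((xˡ × B) ⊢ B) ⊣ (xʳ × B)`.
(The conventions `{|} ⊢ B = B` and `A ⊣ {|} = A` are built into `rsum`/`lsum`.) -/
def tmul : PBT → Set PBT → Set PBT
  | leaf, _ => {leaf}
  | node l r, B => glsum (grsum (tmul l B) B) (tmul r B)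

/-- Multiplication of groves. -/
def gmul (A B : Set PBT) : Set PBT := ⋃ x ∈ A, tmul x B

end PBT
namespace PBT

@[simp] lemma deg_leaf : deg leaf = 0 := rfl
@[simp] lemma deg_node (l r : PBT) : deg (node l r) = deg l + deg r + 1 := rfl

@[simp] lemma over_leaf_right (x : PBT) : overOp x leaf = x := rfl
@[simp] lemma over_node (x yl yr : PBT) : overOp x (node yl yr) = node (overOp x yl) yr := rfl
@[simp] lemma under_leaf_left (y : PBT) : under leaf y = y := rfl
@[simp] lemma under_node (xl xr y : PBT) : under (node xl xr) y = node xl (under xr y) := rfl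

@[simp] lemma over_leaf_left (y : PBT) : overOp leaf y = y := by
  induction y with
  | leaf => rfl
  | node a b iha ihb => simp [iha]

@[simp] lemma under_leaf_right (x : PBT) : under x leaf = x := by
  induction x with
  | leaf => rfl
  | node a b iha ihb => simp [ihb]

lemma deg_over (x y : PBT) : deg (overOp x y) = deg x + deg y := by
  induction y with
  | leaf => simp
  | node a b iha ihb => simp [iha]; omega

lemma deg_under (x y : PBT) : deg (under x y) = deg x + deg y := by
  induction x with
  | leaf => simp
  | node a b iha ihb => simp [ihb]; omega

lemma tle.deg_eq {x y : PBT} (h : tle x y) : deg x = deg y := by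
  induction h with
  | refl => rfl
  | trans _ _ ih1 ih2 => omega
  | rotate x y z => simp; omega
  | node_left z _ ih => simp [ih]
  | node_right z _ ih => simp [ih]

/-- a measure strictly increasing along nontrivial Tamari steps -/
def fm : PBT → ℕ
  | leaf => 0
  | node l r => fm l + fm r + deg r

@[simp] lemma fm_leaf : fm leaf = 0 := rfl
@[simp] lemma fm_node (l r : PBT) : fm (node l r) = fm l + fm r + deg r := rfl

lemma fm_mono {x y : PBT} (h : tle x y) : fm x ≤ fm y ∧ (fm x = fm y → x = y) := by
  induction h with
  | refl => exact ⟨le_rfl, fun _ => rfl⟩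
  | trans h1 h2 ih1 ih2 =>
    refine ⟨ih1.1.trans ih2.1, fun he => ?_⟩
    have e1 : fm _ = fm _ := le_antisymm ih1.1 (by omega)
    rw [ih1.2 e1]; exact ih2.2 (by omega)
  | rotate x y z =>
    constructor
    · simp; omega
    · intro he; exfalso; simp at he; omega
  | node_left z _ ih =>
    refine ⟨by simp; omega, fun he => ?_⟩
    simp at he
    rw [ih.2 (by omega)]
  | node_right z h ih =>
    have hd := h.deg_eq
    refine ⟨by simp; omega, fun he => ?_⟩
    simp at he
    rw [ih.2 (by omega)]

lemma tle_antisymm {x y : PBT} (h1 : tle x y) (h2 : tle y x) : x = y :=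
  (fm_mono h1).2 (le_antisymm (fm_mono h1).1 (fm_mono h2).1)

end PBT
namespace PBT

/-- single rotation anywhere -/
inductive step : PBT → PBT → Prop
  | rotate (x y z : PBT) : step (node (node x y) z) (node x (node y z))
  | left {x y : PBT} (z : PBT) : step x y → step (node x z) (node y z)
  | right {x y : PBT} (z : PBT) : step x y → step (node z x) (node z y)

lemma step.tle {x y : PBT} (h : step x y) : tle x y := by
  induction h with
  | rotate x y z => exact tle.rotate x y z
  | left z _ ih => exact tle.node_left z ih
  | right z _ ih => exact tle.node_right z ih

lemma tle_iff_rtg {x y : PBT} : tle x y ↔ Relation.ReflTransGen step x y := by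
  constructor
  · intro h
    induction h with
    | refl => exact .refl
    | trans _ _ ih1 ih2 => exact ih1.trans ih2
    | rotate x y z => exact .single (.rotate x y z)
    | node_left z _ ih => exact Relation.ReflTransGen.lift (fun t => node t z) (fun a b h => step.left z h) _ _ ih
    | node_right z _ ih => exact Relation.ReflTransGen.lift (fun t => node z t) (fun a b h => step.right z h) _ _ ih
  · intro h
    induction h with
    | refl => exact .refl _
    | tail _ h ih => exact ih.trans h.tle

/-- split `u` as an iterated left subtree together with the left-comb rebuild of the rest -/
inductive Lsplit : PBT → PBT → PBT → Prop
  | base (a b : PBT) : Lsplit (node a b) a b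
  | go {a s r : PBT} (b : PBT) : Lsplit a s r → Lsplit (node a b) s (node r b)

lemma stepsplit : ∀ {u u₁ s r : PBT}, step u u₁ → Lsplit u₁ s r →
    ∃ s' r', Lsplit u s' r' ∧ tle s' s ∧ tle r' r := by
  intro u u₁ s r h
  induction h generalizing s r with
  | rotate x y z =>
    intro hl
    cases hl with
    | base => exact ⟨x, node y z, .go z (.base x y), .refl x, .refl _⟩
    | go _ hl' =>
      rename_i r₀
      exact ⟨s, node (node r₀ y) z, .go z (.go y hl'), .refl s, tle.rotate _ _ _⟩
  | left z hst ih =>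
    intro hl
    cases hl with
    | base => exact ⟨_, z, .base _ z, hst.tle, .refl z⟩
    | go _ hl' =>
      obtain ⟨s', r', h1, h2, h3⟩ := ih hl'
      exact ⟨s', node r' z, .go z h1, h2, tle.node_left z h3⟩
  | right z hst ih =>
    intro hl
    cases hl with
    | base => exact ⟨z, _, .base z _, .refl z, hst.tle⟩
    | go _ hl' => exact ⟨s, node _ _, .go _ hl', .refl s, tle.node_right _ hst.tle⟩

lemma decomp {u c d : PBT} (h : tle u (node c d)) :
    ∃ s r, Lsplit u s r ∧ tle s c ∧ tle r d := by
  rw [tle_iff_rtg] at h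
  induction h using Relation.ReflTransGen.head_induction_on with
  | refl => exact ⟨c, d, .base c d, .refl c, .refl d⟩
  | head hstep _ ih =>
    obtain ⟨s, r, hs, h1, h2⟩ := ih
    obtain ⟨s', r', hs', h1', h2'⟩ := stepsplit hstep hs
    exact ⟨s', r', hs', h1'.trans h1, h2'.trans h2⟩

/-- proper iterated left subtree -/
inductive PIL : PBT → PBT → Prop
  | base (a b : PBT) : PIL a (node a b)
  | step {t a : PBT} (b : PBT) : PIL t a → PIL t (node a b)

lemma PIL.deg_lt {t u : PBT} (h : PIL t u) : deg t < deg u := by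
  induction h with
  | base => simp
  | step b _ ih => simp; omega

lemma PIL.inv {t a b : PBT} (h : PIL t (node a b)) : t = a ∨ PIL t a := by
  cases h with
  | base => exact Or.inl rfl
  | step _ h => exact Or.inr h

lemma Lsplit.pil {u s r : PBT} (h : Lsplit u s r) : PIL s u := by
  induction h with
  | base a b => exact PIL.base a b
  | go b _ ih => exact ih.step b

lemma Lsplit.deg_lt {u s r : PBT} (h : Lsplit u s r) : deg s < deg u := h.pil.deg_lt

lemma lsplit_over_xl {xl xr y s r : PBT} (h : Lsplit (overOp (node xl xr) y) s r)
    (hd : deg s = deg xl) : s = xl ∧ r = overOp xr y := by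
  induction y generalizing s r with
  | leaf =>
    simp at h
    cases h with
    | base => exact ⟨rfl, rfl⟩
    | go _ h' => have := h'.deg_lt; omega
  | node c d ihc ihd =>
    simp at h
    cases h with
    | base => exfalso; have : deg (overOp (node xl xr) c) = _ := deg_over _ c; simp at this; omega
    | go _ h' =>
      obtain ⟨h1, h2⟩ := ihc h' hd
      exact ⟨h1, by rw [h2]; rfl⟩

lemma lsplit_over_yl {x yl yr s r : PBT} (h : Lsplit (overOp x (node yl yr)) s r)
    (hd : deg s = deg x + deg yl) : s = overOp x yl ∧ r = yr := by
  simp at h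
  cases h with
  | base => exact ⟨rfl, rfl⟩
  | go _ h' => have := h'.deg_lt; rw [deg_over] at this; omega

lemma lsplit_over_cases {x y s r : PBT} (h : Lsplit (overOp x y) s r) :
    (∃ t, PIL t y ∧ deg s = deg x + deg t) ∨ PIL s x := by
  induction y generalizing s r with
  | leaf => simp at h; exact Or.inr h.pil
  | node c d ihc ihd =>
    simp at h
    cases h with
    | base => exact Or.inl ⟨c, PIL.base c d, by rw [deg_over]⟩
    | go _ h' =>
      rcases ihc h' with ⟨t, h1, h2⟩ | h1
      · exact Or.inl ⟨t, h1.step d, h2⟩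
      · exact Or.inr h1

@[simp] lemma σ_leaf : σ leaf = leaf := rfl
@[simp] lemma σ_node (l r : PBT) : σ (node l r) = node (σ r) (σ l) := rfl

@[simp] lemma σ_σ (t : PBT) : σ (σ t) = t := by
  induction t with
  | leaf => rfl
  | node l r ihl ihr => simp [ihl, ihr]

@[simp] lemma deg_σ (t : PBT) : deg (σ t) = deg t := by
  induction t with
  | leaf => rfl
  | node l r ihl ihr => simp [ihl, ihr]; omega

lemma tle_σ {u v : PBT} (h : tle u v) : tle (σ v) (σ u) := by
  induction h with
  | refl => exact .refl _
  | trans _ _ ih1 ih2 => exact ih2.trans ih1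
  | rotate x y z => exact tle.rotate (σ z) (σ y) (σ x)
  | node_left z _ ih => exact tle.node_right _ ih
  | node_right z _ ih => exact tle.node_left _ ih

lemma σ_over (x y : PBT) : σ (overOp x y) = under (σ y) (σ x) := by
  induction y with
  | leaf => rfl
  | node c d ihc ihd => simp [ihc]

lemma σ_under (x y : PBT) : σ (under x y) = overOp (σ y) (σ x) := by
  induction x with
  | leaf => rfl
  | node a b iha ihb => simp [ihb]

end PBT
namespace PBT

lemma tle_over_node (a b y : PBT) : tle (overOp (node a b) y) (node a (overOp b y)) := by
  induction y with
  | leaf => exact .refl _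
  | node c d ihc ihd =>
    simp only [over_node]
    exact (tle.node_left d ihc).trans (tle.rotate a (overOp b c) d)

lemma tle_node_under (x c d : PBT) : tle (node (under x c) d) (under x (node c d)) := by
  induction x with
  | leaf => exact .refl _
  | node a b iha ihb =>
    simp only [under_node]
    exact (tle.rotate a (under b c) d).trans (tle.node_right a ihb)

lemma over_le_under (x y : PBT) : tle (overOp x y) (under x y) := by
  induction x with
  | leaf => simp; exact .refl _
  | node a b iha ihb =>
    exact (tle_over_node a b y).trans (tle.node_right a ihb)

lemma mem_sum {x y z : PBT} : z ∈ sum x y ↔ tle (overOp x y) z ∧ tle z (under x y) := Iff.rfl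

lemma sum_nonempty (x y : PBT) : (sum x y).Nonempty :=
  ⟨overOp x y, .refl _, over_le_under x y⟩

lemma deg_of_mem_sum {x y z : PBT} (h : z ∈ sum x y) : deg z = deg x + deg y := by
  have := h.1.deg_eq
  rw [deg_over] at this
  omega

lemma sum_leaf_left (y : PBT) : sum leaf y = {y} := by
  ext z
  simp only [mem_sum, over_leaf_left, under_leaf_left, Set.mem_singleton_iff]
  exact ⟨fun ⟨h1, h2⟩ => (tle_antisymm h1 h2).symm, fun h => by subst h; exact ⟨.refl _, .refl _⟩⟩

lemma sum_leaf_right (x : PBT) : sum x leaf = {x} := by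
  ext z
  simp only [mem_sum, over_leaf_right, under_leaf_right, Set.mem_singleton_iff]
  exact ⟨fun ⟨h1, h2⟩ => (tle_antisymm h1 h2).symm, fun h => by subst h; exact ⟨.refl _, .refl _⟩⟩

lemma lsum_node {xl xr yl yr : PBT} :
    lsum (node xl xr) (node yl yr) = (fun z => node xl z) '' sum xr (node yl yr) := rfl

lemma rsum_node {xl xr yl yr : PBT} :
    rsum (node xl xr) (node yl yr) = (fun z => node z yr) '' sum (node xl xr) yl := rfl

theorem sum_split {xl xr yl yr : PBT} :
    sum (node xl xr) (node yl yr) = lsum (node xl xr) (node yl yr) ∪ rsum (node xl xr) (node yl yr) := by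
  ext z
  constructor
  · -- hard direction
    rintro ⟨h1, h2⟩
    have hdz : deg z = deg (node xl xr) + deg (node yl yr) := deg_of_mem_sum ⟨h1, h2⟩
    obtain ⟨zl, zr, rfl⟩ : ∃ zl zr, z = node zl zr := by
      cases z with
      | leaf => exfalso; simp at hdz
      | node zl zr => exact ⟨zl, zr, rfl⟩
    have hdz' : deg zl + deg zr + 1 = (deg xl + deg xr + 1) + (deg yl + deg yr + 1) := by
      simpa using hdz
    obtain ⟨s, r, hsp, hs, hr⟩ := decomp h1
    have h2σ : tle (overOp (σ (node yl yr)) (σ (node xl xr))) (node (σ zr) (σ zl)) := by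
      have := tle_σ h2
      rwa [σ_under, σ_node] at this
    obtain ⟨s', r', hsp', hs', hr'⟩ := decomp h2σ
    have ds : deg s = deg zl := hs.deg_eq
    have ds' : deg s' = deg zr := by have := hs'.deg_eq; simpa using this
    have hspy : Lsplit (overOp (node (σ yr) (σ yl)) (σ (node xl xr))) s' r' := hsp'
    by_cases hA : deg zl = deg xl
    · obtain ⟨hseq, hreq⟩ := lsplit_over_xl hsp (ds.trans hA)
      rw [hseq] at hs
      rw [hreq] at hr
      have hup : deg s' = deg (σ (node yl yr)) + deg (σ xr) := by simp; omega
      obtain ⟨hseq', hreq'⟩ := lsplit_over_yl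
        (show Lsplit (overOp (σ (node yl yr)) (node (σ xr) (σ xl))) s' r' from hsp') hup
      rw [hseq'] at hs'
      rw [hreq'] at hr'
      have hzr : tle zr (under xr (node yl yr)) := by
        rw [← σ_under] at hs'
        have := tle_σ hs'; simpa using this
      have hzl : tle zl xl := by
        have := tle_σ hr'; simpa using this
      have : zl = xl := tle_antisymm hzl hs
      subst this
      exact Or.inl ⟨zr, ⟨hr, hzr⟩, rfl⟩
    by_cases hB : deg zl = (deg xl + deg xr + 1) + deg yl
    · obtain ⟨hseq, hreq⟩ := lsplit_over_yl hsp (by simpa using ds.trans hB)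
      rw [hseq] at hs
      rw [hreq] at hr
      have hup : deg s' = deg (σ yr) := by simp; omega
      obtain ⟨hseq', hreq'⟩ := lsplit_over_xl hspy hup
      rw [hseq'] at hs'
      rw [hreq'] at hr'
      have hzr : tle zr yr := by have := tle_σ hs'; simpa using this
      have hzl : tle zl (under (node xl xr) yl) := by
        rw [← σ_under] at hr'
        have := tle_σ hr'; simpa using this
      have : zr = yr := tle_antisymm hzr hr
      subst this
      exact Or.inr ⟨zl, ⟨hs, hzl⟩, rfl⟩
    · exfalso
      rcases lsplit_over_cases hsp with ⟨t, pt, hdt⟩ | ps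
      · simp only [deg_node] at hdt
        have htyl : deg t < deg yl := by
          rcases pt.inv with h | h
          · subst h; omega
          · exact h.deg_lt
        rcases lsplit_over_cases hspy with ⟨t', pt', hdt'⟩ | ps'
        · simp at hdt'; omega
        · rcases ps'.inv with h | h
          · have : deg s' = deg yr := by rw [h]; simp
            omega
          · have := h.deg_lt; simp at this; omega
      · have hxl : deg zl < deg xl := by
          rcases ps.inv with h | h
          · subst h; omega
          · have := h.deg_lt; omega
        rcases lsplit_over_cases hspy with ⟨t', pt', hdt'⟩ | ps'
        · rcases pt'.inv with h | h
          · subst h; simp at hdt'; omega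
          · have := h.deg_lt; simp at this hdt'; omega
        · have := ps'.deg_lt; simp at this; omega
  · -- easy direction
    intro hz
    rcases hz with hz | hz
    · rw [lsum_node] at hz
      obtain ⟨w, hw, rfl⟩ := hz
      refine ⟨?_, ?_⟩
      · exact (tle_over_node xl xr (node yl yr)).trans (tle.node_right xl hw.1)
      · exact tle.node_right xl hw.2
    · rw [rsum_node] at hz
      obtain ⟨w, hw, rfl⟩ := hz
      refine ⟨?_, ?_⟩
      · exact tle.node_left yr hw.1
      · exact (tle.node_left yr hw.2).trans (tle_node_under (node xl xr) yl yr)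

end PBT
namespace PBT

lemma deg_eq_zero_iff {t : PBT} : deg t = 0 ↔ t = leaf := by
  cases t <;> simp

lemma ne_leaf_of_mem_sum {x y z : PBT} (h : z ∈ sum x y) (hx : x ≠ leaf) : z ≠ leaf := by
  intro hz
  subst hz
  have := deg_of_mem_sum h
  simp at this
  exact hx (deg_eq_zero_iff.mp (by omega))

lemma ne_leaf_of_mem_sum' {x y z : PBT} (h : z ∈ sum x y) (hy : y ≠ leaf) : z ≠ leaf := by
  intro hz
  subst hz
  have := deg_of_mem_sum h
  simp at this
  exact hy (deg_eq_zero_iff.mp (by omega))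

@[simp] lemma lsum_lf_right (x : PBT) : lsum x leaf = {x} := by cases x <;> rfl
@[simp] lemma rsum_lf_left (y : PBT) : rsum leaf y = {y} := by cases y <;> rfl
lemma lsum_leaf (y : PBT) : lsum leaf y = {leaf} := by cases y <;> rfl
lemma rsum_leaf (x : PBT) : rsum x leaf = {leaf} := by cases x <;> rfl

lemma mem_lsum_node {xl xr y w : PBT} :
    w ∈ lsum (node xl xr) y ↔ ∃ t ∈ sum xr y, w = node xl t := by
  cases y with
  | leaf => simp [sum_leaf_right]
  | node yl yr =>
    rw [lsum_node]
    constructor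
    · rintro ⟨t, ht, rfl⟩; exact ⟨t, ht, rfl⟩
    · rintro ⟨t, ht, rfl⟩; exact ⟨t, ht, rfl⟩

lemma mem_rsum_node {x yl yr w : PBT} :
    w ∈ rsum x (node yl yr) ↔ ∃ t ∈ sum x yl, w = node t yr := by
  cases x with
  | leaf => simp [sum_leaf_left]
  | node xl xr =>
    rw [rsum_node]
    constructor
    · rintro ⟨t, ht, rfl⟩; exact ⟨t, ht, rfl⟩
    · rintro ⟨t, ht, rfl⟩; exact ⟨t, ht, rfl⟩

lemma mem_gsum {A B : Set PBT} {z : PBT} : z ∈ gsum A B ↔ ∃ x ∈ A, ∃ y ∈ B, z ∈ sum x y := by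
  simp [gsum]

lemma mem_glsum {A B : Set PBT} {z : PBT} : z ∈ glsum A B ↔ ∃ x ∈ A, ∃ y ∈ B, z ∈ lsum x y := by
  simp [glsum]

lemma mem_grsum {A B : Set PBT} {z : PBT} : z ∈ grsum A B ↔ ∃ x ∈ A, ∃ y ∈ B, z ∈ rsum x y := by
  simp [grsum]

lemma mem_gmul {A B : Set PBT} {z : PBT} : z ∈ gmul A B ↔ ∃ x ∈ A, z ∈ tmul x B := by
  simp [gmul]

lemma mem_gsum_singR {A : Set PBT} {z w : PBT} : w ∈ gsum A {z} ↔ ∃ x ∈ A, w ∈ sum x z := by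
  simp [mem_gsum]

lemma mem_gsum_singL {B : Set PBT} {x w : PBT} : w ∈ gsum {x} B ↔ ∃ y ∈ B, w ∈ sum x y := by
  simp [mem_gsum]

lemma mem_glsum_singR {A : Set PBT} {z w : PBT} : w ∈ glsum A {z} ↔ ∃ x ∈ A, w ∈ lsum x z := by
  simp [mem_glsum]

lemma mem_glsum_singL {B : Set PBT} {x w : PBT} : w ∈ glsum {x} B ↔ ∃ y ∈ B, w ∈ lsum x y := by
  simp [mem_glsum]

lemma mem_grsum_singR {A : Set PBT} {z w : PBT} : w ∈ grsum A {z} ↔ ∃ x ∈ A, w ∈ rsum x z := by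
  simp [mem_grsum]

lemma mem_grsum_singL {B : Set PBT} {x w : PBT} : w ∈ grsum {x} B ↔ ∃ y ∈ B, w ∈ rsum x y := by
  simp [mem_grsum]

lemma gsum_singleton (x y : PBT) : gsum {x} {y} = sum x y := by
  ext w; simp [mem_gsum]

lemma gsum_leaf_left (B : Set PBT) : gsum {leaf} B = B := by
  ext w; simp [mem_gsum, sum_leaf_left]

lemma gsum_leaf_right (A : Set PBT) : gsum A {leaf} = A := by
  ext w; simp [mem_gsum, sum_leaf_right]

lemma sum_split' {x y : PBT} (hx : x ≠ leaf) (hy : y ≠ leaf) :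
    sum x y = lsum x y ∪ rsum x y := by
  cases x with
  | leaf => exact absurd rfl hx
  | node xl xr =>
    cases y with
    | leaf => exact absurd rfl hy
    | node yl yr => exact sum_split

lemma gsum_split {A B : Set PBT} (hA : ∀ a ∈ A, a ≠ leaf) (hB : ∀ b ∈ B, b ≠ leaf) :
    gsum A B = glsum A B ∪ grsum A B := by
  ext w
  simp only [mem_gsum, mem_glsum, mem_grsum, Set.mem_union]
  constructor
  · rintro ⟨x, hx, y, hy, hw⟩
    rw [sum_split' (hA x hx) (hB y hy)] at hw
    rcases hw with hw | hw
    · exact Or.inl ⟨x, hx, y, hy, hw⟩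
    · exact Or.inr ⟨x, hx, y, hy, hw⟩
  · rintro (⟨x, hx, y, hy, hw⟩ | ⟨x, hx, y, hy, hw⟩)
    · exact ⟨x, hx, y, hy, by rw [sum_split' (hA x hx) (hB y hy)]; exact Or.inl hw⟩
    · exact ⟨x, hx, y, hy, by rw [sum_split' (hA x hx) (hB y hy)]; exact Or.inr hw⟩

lemma gsum_union_left (A B C : Set PBT) : gsum (A ∪ B) C = gsum A C ∪ gsum B C := by
  ext w; simp only [mem_gsum, Set.mem_union]; aesop

lemma gsum_union_right (A B C : Set PBT) : gsum A (B ∪ C) = gsum A B ∪ gsum A C := by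
  ext w; simp only [mem_gsum, Set.mem_union]; aesop

lemma glsum_union_left (A B C : Set PBT) : glsum (A ∪ B) C = glsum A C ∪ glsum B C := by
  ext w; simp only [mem_glsum, Set.mem_union]; aesop

lemma glsum_union_right (A B C : Set PBT) : glsum A (B ∪ C) = glsum A B ∪ glsum A C := by
  ext w; simp only [mem_glsum, Set.mem_union]; aesop

lemma grsum_union_left (A B C : Set PBT) : grsum (A ∪ B) C = grsum A C ∪ grsum B C := by
  ext w; simp only [mem_grsum, Set.mem_union]; aesop

lemma grsum_union_right (A B C : Set PBT) : grsum A (B ∪ C) = grsum A B ∪ grsum A C := by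
  ext w; simp only [mem_grsum, Set.mem_union]; aesop

/-- dendriform axiom 1 at the level of trees, given associativity lower down -/
lemma ax1 {xl xr y z : PBT} (hy : y ≠ leaf) (hz : z ≠ leaf)
    (IH : gsum (sum xr y) {z} = gsum {xr} (sum y z)) :
    glsum (lsum (node xl xr) y) {z} = glsum {node xl xr} (sum y z) := by
  ext w
  rw [mem_glsum_singR, mem_glsum_singL]
  constructor
  · rintro ⟨u, hu, hw⟩
    rw [mem_lsum_node] at hu
    obtain ⟨t, ht, rfl⟩ := hu
    rw [mem_lsum_node] at hw
    obtain ⟨v, hv, rfl⟩ := hw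
    have : v ∈ gsum {xr} (sum y z) := by
      rw [← IH, mem_gsum_singR]
      exact ⟨t, ht, hv⟩
    rw [mem_gsum_singL] at this
    obtain ⟨c, hc, hvc⟩ := this
    exact ⟨c, hc, mem_lsum_node.mpr ⟨v, hvc, rfl⟩⟩
  · rintro ⟨c, hc, hw⟩
    rw [mem_lsum_node] at hw
    obtain ⟨v, hv, rfl⟩ := hw
    have : v ∈ gsum (sum xr y) {z} := by
      rw [IH, mem_gsum_singL]
      exact ⟨c, hc, hv⟩
    rw [mem_gsum_singR] at this
    obtain ⟨t, ht, hvz⟩ := this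
    exact ⟨node xl t, mem_lsum_node.mpr ⟨t, ht, rfl⟩, mem_lsum_node.mpr ⟨v, hvz, rfl⟩⟩

/-- dendriform axiom 2 at the level of trees -/
lemma ax2 {x yl yr zl zr : PBT} :
    glsum (rsum x (node yl yr)) {node zl zr} = grsum {x} (lsum (node yl yr) (node zl zr)) := by
  ext w
  rw [mem_glsum_singR, mem_grsum_singL]
  constructor
  · rintro ⟨u, hu, hw⟩
    rw [mem_rsum_node] at hu
    obtain ⟨t, ht, rfl⟩ := hu
    rw [mem_lsum_node] at hw
    obtain ⟨v, hv, rfl⟩ := hw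
    exact ⟨node yl v, mem_lsum_node.mpr ⟨v, hv, rfl⟩, mem_rsum_node.mpr ⟨t, ht, rfl⟩⟩
  · rintro ⟨c, hc, hw⟩
    rw [mem_lsum_node] at hc
    obtain ⟨v, hv, rfl⟩ := hc
    rw [mem_rsum_node] at hw
    obtain ⟨t, ht, rfl⟩ := hw
    exact ⟨node t yr, mem_rsum_node.mpr ⟨t, ht, rfl⟩, mem_lsum_node.mpr ⟨v, hv, rfl⟩⟩

/-- dendriform axiom 3 at the level of trees, given associativity lower down -/
lemma ax3 {x y zl zr : PBT}
    (IH : gsum (sum x y) {zl} = gsum {x} (sum y zl)) :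
    grsum (sum x y) {node zl zr} = grsum {x} (rsum y (node zl zr)) := by
  ext w
  rw [mem_grsum_singR, mem_grsum_singL]
  constructor
  · rintro ⟨u, hu, hw⟩
    rw [mem_rsum_node] at hw
    obtain ⟨t, ht, rfl⟩ := hw
    have : t ∈ gsum {x} (sum y zl) := by
      rw [← IH, mem_gsum_singR]
      exact ⟨u, hu, ht⟩
    rw [mem_gsum_singL] at this
    obtain ⟨v, hv, htv⟩ := this
    exact ⟨node v zr, mem_rsum_node.mpr ⟨v, hv, rfl⟩, mem_rsum_node.mpr ⟨t, htv, rfl⟩⟩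
  · rintro ⟨c, hc, hw⟩
    rw [mem_rsum_node] at hc
    obtain ⟨v, hv, rfl⟩ := hc
    rw [mem_rsum_node] at hw
    obtain ⟨t, ht, rfl⟩ := hw
    have : t ∈ gsum (sum x y) {zl} := by
      rw [IH, mem_gsum_singL]
      exact ⟨v, hv, ht⟩
    rw [mem_gsum_singR] at this
    obtain ⟨p, hp, htp⟩ := this
    exact ⟨p, hp, mem_rsum_node.mpr ⟨t, htp, rfl⟩⟩

theorem sum_assoc (x y z : PBT) : gsum (sum x y) {z} = gsum {x} (sum y z) := by
  cases x with
  | leaf => rw [sum_leaf_left, gsum_singleton, gsum_leaf_left]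
  | node xl xr =>
  cases y with
  | leaf => rw [sum_leaf_right, sum_leaf_left]
  | node yl yr =>
  cases z with
  | leaf => rw [gsum_leaf_right, sum_leaf_right, gsum_singleton]
  | node zl zr =>
    have IH1 := sum_assoc xr (node yl yr) (node zl zr)
    have IH2 := sum_assoc (node xl xr) (node yl yr) zl
    have hlne : ∀ a ∈ lsum (node xl xr) (node yl yr), a ≠ leaf := by
      intro a ha
      rw [mem_lsum_node] at ha
      obtain ⟨t, _, rfl⟩ := ha
      simp
    have hrne : ∀ a ∈ rsum (node xl xr) (node yl yr), a ≠ leaf := by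
      intro a ha
      rw [mem_rsum_node] at ha
      obtain ⟨t, _, rfl⟩ := ha
      simp
    have hlne' : ∀ a ∈ lsum (node yl yr) (node zl zr), a ≠ leaf := by
      intro a ha
      rw [mem_lsum_node] at ha
      obtain ⟨t, _, rfl⟩ := ha
      simp
    have hrne' : ∀ a ∈ rsum (node yl yr) (node zl zr), a ≠ leaf := by
      intro a ha
      rw [mem_rsum_node] at ha
      obtain ⟨t, _, rfl⟩ := ha
      simp
    have hsing : ∀ a ∈ ({node zl zr} : Set PBT), a ≠ leaf := by
      rintro a rfl
      simp
    have hsingx : ∀ a ∈ ({node xl xr} : Set PBT), a ≠ leaf := by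
      rintro a rfl
      simp
    have e1 : glsum (lsum (node xl xr) (node yl yr)) {node zl zr}
        = glsum {node xl xr} (lsum (node yl yr) (node zl zr))
          ∪ glsum {node xl xr} (rsum (node yl yr) (node zl zr)) := by
      rw [ax1 (by simp) (by simp) IH1,
        sum_split' (show (node yl yr) ≠ leaf by simp) (show (node zl zr) ≠ leaf by simp),
        glsum_union_right]
    have e2 : glsum (rsum (node xl xr) (node yl yr)) {node zl zr}
        = grsum {node xl xr} (lsum (node yl yr) (node zl zr)) := ax2
    have e3 : grsum (lsum (node xl xr) (node yl yr)) {node zl zr}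
        ∪ grsum (rsum (node xl xr) (node yl yr)) {node zl zr}
        = grsum {node xl xr} (rsum (node yl yr) (node zl zr)) := by
      rw [← grsum_union_left,
        ← sum_split' (show (node xl xr) ≠ leaf by simp) (show (node yl yr) ≠ leaf by simp),
        ax3 IH2]
    have e3' : ∀ w, (w ∈ grsum (lsum (node xl xr) (node yl yr)) {node zl zr}
        ∨ w ∈ grsum (rsum (node xl xr) (node yl yr)) {node zl zr})
        ↔ w ∈ grsum {node xl xr} (rsum (node yl yr) (node zl zr)) := by
      intro w
      rw [← e3]
      simp [Set.mem_union]
    rw [sum_split' (show (node xl xr) ≠ leaf by simp) (show (node yl yr) ≠ leaf by simp),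
      gsum_union_left, gsum_split hlne hsing, gsum_split hrne hsing,
      sum_split' (show (node yl yr) ≠ leaf by simp) (show (node zl zr) ≠ leaf by simp),
      gsum_union_right, gsum_split hsingx hlne', gsum_split hsingx hrne', e1, e2]
    ext w
    have h3 := e3' w
    simp only [Set.mem_union] at h3 ⊢
    tauto
termination_by deg x + deg y + deg z
decreasing_by
  · simp
  · simp

end PBT
namespace PBT

@[simp] lemma tmul_leaf (B : Set PBT) : tmul leaf B = {leaf} := rfl
lemma tmul_node (l r : PBT) (B : Set PBT) :
    tmul (node l r) B = glsum (grsum (tmul l B) B) (tmul r B) := rfl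

lemma gmul_singleton (x : PBT) (B : Set PBT) : gmul {x} B = tmul x B := by
  ext w; simp [mem_gmul]

lemma glsum_singleton (x y : PBT) : glsum {x} {y} = lsum x y := by
  ext w; simp [mem_glsum]

lemma grsum_singleton (x y : PBT) : grsum {x} {y} = rsum x y := by
  ext w; simp [mem_grsum]

lemma glsum_leaf_right (A : Set PBT) : glsum A {leaf} = A := by
  ext w; simp [mem_glsum]

lemma grsum_leaf_left (A : Set PBT) : grsum {leaf} A = A := by
  ext w; simp [mem_grsum]

lemma glsum_leaf_left {B : Set PBT} (hB : B.Nonempty) : glsum {leaf} B = {leaf} := by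
  ext w
  simp only [mem_glsum_singL]
  constructor
  · rintro ⟨v, hv, hw⟩
    rw [lsum_leaf] at hw
    exact hw
  · rintro rfl
    exact ⟨hB.choose, hB.choose_spec, by rw [lsum_leaf]; rfl⟩

lemma grsum_leaf_right {A : Set PBT} (hA : A.Nonempty) : grsum A {leaf} = {leaf} := by
  ext w
  simp only [mem_grsum_singR]
  constructor
  · rintro ⟨v, hv, hw⟩
    rw [rsum_leaf] at hw
    exact hw
  · rintro rfl
    exact ⟨hA.choose, hA.choose_spec, by rw [rsum_leaf]; rfl⟩

/-- full tree-level dendriform axiom 1 -/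
lemma Ax1 (x y z : PBT) : glsum (lsum x y) {z} = glsum {x} (sum y z) := by
  cases y with
  | leaf => rw [lsum_lf_right, sum_leaf_left]
  | node yl yr =>
  cases z with
  | leaf => rw [glsum_leaf_right, sum_leaf_right, glsum_singleton]
  | node zl zr =>
  cases x with
  | leaf =>
    rw [lsum_leaf, glsum_leaf_left (Set.singleton_nonempty _),
      glsum_leaf_left (sum_nonempty _ _)]
  | node xl xr => exact ax1 (by simp) (by simp) (sum_assoc xr _ _)

/-- full tree-level dendriform axiom 2 -/
lemma Ax2 (x y z : PBT) : glsum (rsum x y) {z} = grsum {x} (lsum y z) := by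
  cases y with
  | leaf =>
    rw [rsum_leaf x, lsum_leaf z, grsum_singleton, rsum_leaf x,
      glsum_leaf_left (Set.singleton_nonempty z)]
  | node yl yr =>
  cases z with
  | leaf => rw [glsum_leaf_right, lsum_lf_right, grsum_singleton]
  | node zl zr => exact ax2

/-- full tree-level dendriform axiom 3 -/
lemma Ax3 (x y z : PBT) : grsum (sum x y) {z} = grsum {x} (rsum y z) := by
  cases z with
  | leaf =>
    rw [rsum_leaf y, grsum_singleton, rsum_leaf x, grsum_leaf_right (sum_nonempty x y)]
  | node zl zr => exact ax3 (sum_assoc x y zl)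

/-- grove-level dendriform axiom 1 -/
lemma GAx1 (A B C : Set PBT) : glsum (glsum A B) C = glsum A (gsum B C) := by
  ext w
  simp only [mem_glsum, mem_gsum]
  constructor
  · rintro ⟨u, ⟨x, hx, y, hy, hu⟩, z, hz, hw⟩
    have h1 : w ∈ glsum (lsum x y) {z} := mem_glsum_singR.mpr ⟨u, hu, hw⟩
    rw [Ax1] at h1
    obtain ⟨v, hv, hw'⟩ := mem_glsum_singL.mp h1
    exact ⟨x, hx, v, ⟨y, hy, z, hz, hv⟩, hw'⟩
  · rintro ⟨x, hx, v, ⟨y, hy, z, hz, hv⟩, hw⟩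
    have h1 : w ∈ glsum {x} (sum y z) := mem_glsum_singL.mpr ⟨v, hv, hw⟩
    rw [← Ax1] at h1
    obtain ⟨u, hu, hw'⟩ := mem_glsum_singR.mp h1
    exact ⟨u, ⟨x, hx, y, hy, hu⟩, z, hz, hw'⟩

/-- grove-level dendriform axiom 2 -/
lemma GAx2 (A B C : Set PBT) : glsum (grsum A B) C = grsum A (glsum B C) := by
  ext w
  simp only [mem_glsum, mem_grsum]
  constructor
  · rintro ⟨u, ⟨x, hx, y, hy, hu⟩, z, hz, hw⟩
    have h1 : w ∈ glsum (rsum x y) {z} := mem_glsum_singR.mpr ⟨u, hu, hw⟩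
    rw [Ax2] at h1
    obtain ⟨v, hv, hw'⟩ := mem_grsum_singL.mp h1
    exact ⟨x, hx, v, ⟨y, hy, z, hz, hv⟩, hw'⟩
  · rintro ⟨x, hx, v, ⟨y, hy, z, hz, hv⟩, hw⟩
    have h1 : w ∈ grsum {x} (lsum y z) := mem_grsum_singL.mpr ⟨v, hv, hw⟩
    rw [← Ax2] at h1
    obtain ⟨u, hu, hw'⟩ := mem_glsum_singR.mp h1
    exact ⟨u, ⟨x, hx, y, hy, hu⟩, z, hz, hw'⟩

/-- grove-level dendriform axiom 3 -/
lemma GAx3 (A B C : Set PBT) : grsum (gsum A B) C = grsum A (grsum B C) := by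
  ext w
  simp only [mem_grsum, mem_gsum]
  constructor
  · rintro ⟨u, ⟨x, hx, y, hy, hu⟩, z, hz, hw⟩
    have h1 : w ∈ grsum (sum x y) {z} := mem_grsum_singR.mpr ⟨u, hu, hw⟩
    rw [Ax3] at h1
    obtain ⟨v, hv, hw'⟩ := mem_grsum_singL.mp h1
    exact ⟨x, hx, v, ⟨y, hy, z, hz, hv⟩, hw'⟩
  · rintro ⟨x, hx, v, ⟨y, hy, z, hz, hv⟩, hw⟩
    have h1 : w ∈ grsum {x} (rsum y z) := mem_grsum_singL.mpr ⟨v, hv, hw⟩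
    rw [← Ax3] at h1
    obtain ⟨u, hu, hw'⟩ := mem_grsum_singR.mp h1
    exact ⟨u, ⟨x, hx, y, hy, hu⟩, z, hz, hw'⟩

lemma lsum_nonempty (x y : PBT) : (lsum x y).Nonempty := by
  cases x with
  | leaf => rw [lsum_leaf]; exact ⟨leaf, rfl⟩
  | node xl xr =>
    obtain ⟨t, ht⟩ := sum_nonempty xr y
    exact ⟨node xl t, mem_lsum_node.mpr ⟨t, ht, rfl⟩⟩

lemma rsum_nonempty (x y : PBT) : (rsum x y).Nonempty := by
  cases y with
  | leaf => rw [rsum_leaf]; exact ⟨leaf, rfl⟩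
  | node yl yr =>
    obtain ⟨t, ht⟩ := sum_nonempty x yl
    exact ⟨node t yr, mem_rsum_node.mpr ⟨t, ht, rfl⟩⟩

lemma grove_ne_leaf {n : ℕ} {A : Set PBT} (hA : Grove n A) (hn : 1 ≤ n) :
    ∀ a ∈ A, a ≠ leaf := by
  intro a ha hl
  subst hl
  have := hA.2 leaf ha
  simp at this
  omega

lemma grsum_grove {a m : ℕ} {A B : Set PBT} (hA : Grove a A) (hB : Grove m B) (hm : 1 ≤ m) :
    Grove (a + m) (grsum A B) := by
  constructor
  · obtain ⟨x, hx⟩ := hA.1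
    obtain ⟨y, hy⟩ := hB.1
    obtain ⟨w, hw⟩ := rsum_nonempty x y
    exact ⟨w, mem_grsum.mpr ⟨x, hx, y, hy, hw⟩⟩
  · intro w hw
    obtain ⟨x, hx, y, hy, hw⟩ := mem_grsum.mp hw
    have hdy := hB.2 y hy
    have hdx := hA.2 x hx
    cases y with
    | leaf => simp at hdy; omega
    | node yl yr =>
      obtain ⟨t, ht, rfl⟩ := mem_rsum_node.mp hw
      have := deg_of_mem_sum ht
      simp at hdy ⊢
      omega

lemma glsum_grove {a b : ℕ} {A B : Set PBT} (hA : Grove a A) (ha : 1 ≤ a) (hB : Grove b B) :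
    Grove (a + b) (glsum A B) := by
  constructor
  · obtain ⟨x, hx⟩ := hA.1
    obtain ⟨y, hy⟩ := hB.1
    obtain ⟨w, hw⟩ := lsum_nonempty x y
    exact ⟨w, mem_glsum.mpr ⟨x, hx, y, hy, hw⟩⟩
  · intro w hw
    obtain ⟨x, hx, y, hy, hw⟩ := mem_glsum.mp hw
    have hdy := hB.2 y hy
    have hdx := hA.2 x hx
    cases x with
    | leaf => simp at hdx; omega
    | node xl xr =>
      obtain ⟨t, ht, rfl⟩ := mem_lsum_node.mp hw
      have := deg_of_mem_sum ht
      simp at hdx ⊢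
      omega

lemma tmul_grove {m : ℕ} (hm : 1 ≤ m) {B : Set PBT} (hB : Grove m B) (x : PBT) :
    Grove (deg x * m) (tmul x B) := by
  induction x with
  | leaf => exact ⟨⟨leaf, rfl⟩, by rintro a rfl; simp⟩
  | node l r ihl ihr =>
    rw [tmul_node]
    have h1 : Grove (deg l * m + m) (grsum (tmul l B) B) := grsum_grove ihl hB hm
    have h2 : Grove ((deg l * m + m) + deg r * m) (glsum (grsum (tmul l B) B) (tmul r B)) :=
      glsum_grove h1 (by omega) ihr
    have : (deg l * m + m) + deg r * m = deg (node l r) * m := by simp; ring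
    rwa [this] at h2

lemma gmul_union (A B C : Set PBT) : gmul (A ∪ B) C = gmul A C ∪ gmul B C := by
  ext w; simp only [mem_gmul, Set.mem_union]; aesop

end PBT
namespace PBT

lemma L012 {m : ℕ} (hm : 1 ≤ m) {B : Set PBT} (hB : Grove m B) :
    ∀ N x y, deg x + deg y ≤ N →
      gmul (lsum x y) B = glsum (tmul x B) (tmul y B) ∧
      gmul (rsum x y) B = grsum (tmul x B) (tmul y B) ∧
      gmul (sum x y) B = gsum (tmul x B) (tmul y B) := by
  intro N
  induction N using Nat.strong_induction_on with
  | _ N IH =>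
  intro x y hxy
  have tg := tmul_grove hm hB
  have l1 : gmul (lsum x y) B = glsum (tmul x B) (tmul y B) := by
    cases y with
    | leaf => rw [lsum_lf_right, gmul_singleton, tmul_leaf, glsum_leaf_right]
    | node yl yr =>
      cases x with
      | leaf =>
        rw [lsum_leaf, gmul_singleton, tmul_leaf, glsum_leaf_left (tg (node yl yr)).1]
      | node xl xr =>
        have hlt : deg xr + deg (node yl yr) < N := by simp at hxy ⊢; omega
        have IH0 : gmul (sum xr (node yl yr)) B
            = gsum (tmul xr B) (tmul (node yl yr) B) :=
          (IH _ hlt xr (node yl yr) le_rfl).2.2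
        rw [tmul_node xl xr B, GAx1, ← IH0]
        ext w
        simp only [mem_gmul, mem_glsum]
        constructor
        · rintro ⟨u, hu, hw⟩
          obtain ⟨t, ht, rfl⟩ := mem_lsum_node.mp hu
          rw [tmul_node] at hw
          obtain ⟨g, hg, v, hv, hw'⟩ := mem_glsum.mp hw
          exact ⟨g, hg, v, ⟨t, ht, hv⟩, hw'⟩
        · rintro ⟨g, hg, v, hv, hw⟩
          obtain ⟨t, ht, hv'⟩ := hv
          exact ⟨node xl t, mem_lsum_node.mpr ⟨t, ht, rfl⟩, by
            rw [tmul_node]; exact mem_glsum.mpr ⟨g, hg, v, hv', hw⟩⟩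
  have l2 : gmul (rsum x y) B = grsum (tmul x B) (tmul y B) := by
    cases x with
    | leaf => rw [rsum_lf_left, gmul_singleton, tmul_leaf, grsum_leaf_left]
    | node xl xr =>
      cases y with
      | leaf =>
        rw [rsum_leaf, gmul_singleton, tmul_leaf, grsum_leaf_right (tg (node xl xr)).1]
      | node yl yr =>
        have hlt : deg (node xl xr) + deg yl < N := by simp at hxy ⊢; omega
        have IH0 : gmul (sum (node xl xr) yl) B
            = gsum (tmul (node xl xr) B) (tmul yl B) :=
          (IH _ hlt (node xl xr) yl le_rfl).2.2
        rw [tmul_node yl yr B, ← GAx2, ← GAx3, ← IH0]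
        ext w
        simp only [mem_gmul, mem_glsum, mem_grsum]
        constructor
        · rintro ⟨u, hu, hw⟩
          obtain ⟨t, ht, rfl⟩ := mem_rsum_node.mp hu
          rw [tmul_node] at hw
          obtain ⟨g, hg, v, hv, hw'⟩ := mem_glsum.mp hw
          obtain ⟨a, ha, b, hb, hg'⟩ := mem_grsum.mp hg
          exact ⟨g, ⟨a, ⟨t, ht, ha⟩, b, hb, hg'⟩, v, hv, hw'⟩
        · rintro ⟨g, ⟨a, ha, b, hb, hg⟩, v, hv, hw⟩
          obtain ⟨t, ht, ha'⟩ := ha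
          exact ⟨node t yr, mem_rsum_node.mpr ⟨t, ht, rfl⟩, by
            rw [tmul_node]
            exact mem_glsum.mpr ⟨g, mem_grsum.mpr ⟨a, ha', b, hb, hg⟩, v, hv, hw⟩⟩
  refine ⟨l1, l2, ?_⟩
  cases x with
  | leaf => rw [sum_leaf_left, gmul_singleton, tmul_leaf, gsum_leaf_left]
  | node xl xr =>
    cases y with
    | leaf => rw [sum_leaf_right, gmul_singleton, tmul_leaf, gsum_leaf_right]
    | node yl yr =>
      have hxne : ∀ a ∈ tmul (node xl xr) B, a ≠ leaf :=
        grove_ne_leaf (tg _) (Nat.mul_pos (by simp only [deg_node]; omega) hm)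
      have hyne : ∀ a ∈ tmul (node yl yr) B, a ≠ leaf :=
        grove_ne_leaf (tg _) (Nat.mul_pos (by simp only [deg_node]; omega) hm)
      rw [sum_split' (by simp) (by simp), gmul_union, l1, l2, ← gsum_split hxne hyne]

lemma GL1 {p : ℕ} (hp : 1 ≤ p) {C : Set PBT} (hC : Grove p C) (A A' : Set PBT) :
    gmul (glsum A A') C = glsum (gmul A C) (gmul A' C) := by
  ext w
  simp only [mem_gmul, mem_glsum]
  constructor
  · rintro ⟨u, ⟨x, hx, y, hy, hu⟩, hw⟩
    have h1 : w ∈ gmul (lsum x y) C := mem_gmul.mpr ⟨u, hu, hw⟩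
    rw [(L012 hp hC _ x y le_rfl).1] at h1
    obtain ⟨g, hg, v, hv, hw'⟩ := mem_glsum.mp h1
    exact ⟨g, ⟨x, hx, hg⟩, v, ⟨y, hy, hv⟩, hw'⟩
  · rintro ⟨g, ⟨x, hx, hg⟩, v, ⟨y, hy, hv⟩, hw⟩
    have h1 : w ∈ glsum (tmul x C) (tmul y C) := mem_glsum.mpr ⟨g, hg, v, hv, hw⟩
    rw [← (L012 hp hC _ x y le_rfl).1] at h1
    obtain ⟨u, hu, hw'⟩ := mem_gmul.mp h1
    exact ⟨u, ⟨x, hx, y, hy, hu⟩, hw'⟩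

lemma GL2 {p : ℕ} (hp : 1 ≤ p) {C : Set PBT} (hC : Grove p C) (A A' : Set PBT) :
    gmul (grsum A A') C = grsum (gmul A C) (gmul A' C) := by
  ext w
  simp only [mem_gmul, mem_grsum]
  constructor
  · rintro ⟨u, ⟨x, hx, y, hy, hu⟩, hw⟩
    have h1 : w ∈ gmul (rsum x y) C := mem_gmul.mpr ⟨u, hu, hw⟩
    rw [(L012 hp hC _ x y le_rfl).2.1] at h1
    obtain ⟨g, hg, v, hv, hw'⟩ := mem_grsum.mp h1
    exact ⟨g, ⟨x, hx, hg⟩, v, ⟨y, hy, hv⟩, hw'⟩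
  · rintro ⟨g, ⟨x, hx, hg⟩, v, ⟨y, hy, hv⟩, hw⟩
    have h1 : w ∈ grsum (tmul x C) (tmul y C) := mem_grsum.mpr ⟨g, hg, v, hv, hw⟩
    rw [← (L012 hp hC _ x y le_rfl).2.1] at h1
    obtain ⟨u, hu, hw'⟩ := mem_gmul.mp h1
    exact ⟨u, ⟨x, hx, y, hy, hu⟩, hw'⟩

theorem gmul_tmul_assoc {m p : ℕ} (hm : 1 ≤ m) (hp : 1 ≤ p) {B C : Set PBT}
    (hB : Grove m B) (hC : Grove p C) (x : PBT) :
    gmul (tmul x B) C = tmul x (gmul B C) := by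
  induction x with
  | leaf => rw [tmul_leaf, gmul_singleton, tmul_leaf, tmul_leaf]
  | node l r ihl ihr =>
    rw [tmul_node, GL1 hp hC, GL2 hp hC, ihl, ihr, tmul_node]

lemma gmul_grove {n m : ℕ} {A B : Set PBT} (hA : Grove n A) (hm : 1 ≤ m) (hB : Grove m B) :
    Grove (n * m) (gmul A B) := by
  constructor
  · obtain ⟨x, hx⟩ := hA.1
    obtain ⟨w, hw⟩ := (tmul_grove hm hB x).1
    exact ⟨w, mem_gmul.mpr ⟨x, hx, hw⟩⟩
  · intro w hw
    obtain ⟨x, hx, hw⟩ := mem_gmul.mp hw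
    have := (tmul_grove hm hB x).2 w hw
    rw [hA.2 x hx] at this
    exact this

lemma tmul_one (x : PBT) : tmul x {node leaf leaf} = {x} := by
  induction x with
  | leaf => rfl
  | node l r ihl ihr =>
    rw [tmul_node, ihl, ihr, grsum_singleton]
    have e1 : rsum l (node leaf leaf) = {node l leaf} := by
      ext w
      rw [mem_rsum_node]
      simp [sum_leaf_right]
    rw [e1, glsum_singleton]
    ext w
    rw [mem_lsum_node]
    simp [sum_leaf_left]

lemma gmul_one_left (A : Set PBT) : gmul {node leaf leaf} A = A := by
  rw [gmul_singleton, tmul_node, tmul_leaf, grsum_leaf_left, glsum_leaf_right]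

lemma gmul_one_right (A : Set PBT) : gmul A {node leaf leaf} = A := by
  ext w
  simp only [mem_gmul]
  constructor
  · rintro ⟨x, hx, hw⟩
    rw [tmul_one] at hw
    rwa [hw]
  · intro hw
    exact ⟨w, hw, by rw [tmul_one]; rfl⟩

end PBT

open PBT in
/-- multiplication of groves is associative, `{1}` (where
`1 = | ∨ |`) is a two-sided neutral element, and the product of a grove of
degree `n` with a grove of degree `m ≥ 1` is a grove of degree `n * m`. -/
theorem gmul_monoid :
    (∀ n m p : ℕ, 0 < n → 0 < m → 0 < p → ∀ A B C : Set PBT,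
      Grove n A → Grove m B → Grove p C →
      gmul (gmul A B) C = gmul A (gmul B C)) ∧
    (∀ n : ℕ, ∀ A : Set PBT, Grove n A →
      gmul {node PBT.leaf PBT.leaf} A = A ∧ gmul A {node PBT.leaf PBT.leaf} = A) ∧
    (∀ n m : ℕ, 1 ≤ m → ∀ A B : Set PBT, Grove n A → Grove m B →
      Grove (n * m) (gmul A B)) := by
  refine ⟨?_, ?_, ?_⟩
  · intro n m p hn hm hp A B C hA hB hC
    ext w
    simp only [mem_gmul]
    constructor
    · rintro ⟨u, hu, hw⟩
      obtain ⟨x, hx, hu'⟩ := hu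
      have h1 : w ∈ gmul (tmul x B) C := mem_gmul.mpr ⟨u, hu', hw⟩
      rw [gmul_tmul_assoc hm hp hB hC x] at h1
      exact ⟨x, hx, h1⟩
    · rintro ⟨x, hx, hw⟩
      have h1 : w ∈ gmul (tmul x B) C := by
        rw [gmul_tmul_assoc hm hp hB hC x]
        exact hw
      obtain ⟨u, hu, hw'⟩ := mem_gmul.mp h1
      exact ⟨u, ⟨x, hx, hu⟩, hw'⟩
  · intro n A hA
    exact ⟨gmul_one_left A, gmul_one_right A⟩
  · intro n m hm A B hA hB
    exact gmul_grove hA hm hB
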